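/- Let Φ = C_1 ∧ … ∧ C_m be a CNF over Boolean variables x_1, …, x_n in which no clause contains both a variable and its negation. Let G_Φ be the simple graph with vertex set {x_i, x̄_i, y_i : i = 1,…,n} ∪ {C_j : j = 1,…,m} ∪ {z}, whose edges are: for each i, the triangle on {x_i, x̄_i, y_i}; all pairs within {C_1, …, C_m, z} (a clique); and an edge between C_j and each literal vertex (x_i or x̄_i) occurring in clause C_j. Then Φ is not satisfiable if and only if G_Φ is a unique key graph. -/

import Mathlib

open scoped Classical

variable {V : Type*} [Fintype V] [DecidableEq V]

/-- A Sperner hypergraph: no hyperedge contains another one. -/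
def SpernerFam (𝓑 : Set (Finset V)) : Prop :=
  ∀ B₁ ∈ 𝓑, ∀ B₂ ∈ 𝓑, B₁ ⊆ B₂ → B₁ = B₂

/-- `T` is a transversal of `𝓑` if it meets every hyperedge. -/
def IsTransversal (𝓑 : Set (Finset V)) (T : Finset V) : Prop :=
  ∀ B ∈ 𝓑, (T ∩ B).Nonempty

/-- `𝓑^d`: the family of inclusion-minimal transversals of `𝓑`. -/
def dualHyp (𝓑 : Set (Finset V)) : Set (Finset V) :=
  {T | IsTransversal 𝓑 T ∧ ∀ T', IsTransversal 𝓑 T' → T' ⊆ T → T' = T}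

/-- A Boolean function `h` on `V` is pure Horn if its set of true assignments contains the
all-true assignment and is closed under componentwise AND. -/
def PureHorn (h : (V → Bool) → Bool) : Prop :=
  h (fun _ => true) = true ∧
  ∀ x y : V → Bool, h x = true → h y = true → h (fun v => x v && y v) = true

/-- The clause `A → v` is an implicate of `h`: every true assignment of `h` that is true on
every element of `A` is also true at `v`. -/
def Implicate (h : (V → Bool) → Bool) (A : Finset V) (v : V) : Prop :=
  ∀ x : V → Bool, h x = true → (∀ a ∈ A, x a = true) → x v = true

/-- `K` is a key of `h` if `K → v` is an implicate of `h` for every `v ∈ V \ K`. -/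
def IsKey (h : (V → Bool) → Bool) (K : Finset V) : Prop :=
  ∀ v ∉ K, Implicate h K v

/-- `𝒦(h)`: the family of inclusion-minimal keys of `h`. -/
def minKeys (h : (V → Bool) → Bool) : Set (Finset V) :=
  {K | IsKey h K ∧ ∀ K', IsKey h K' → K' ⊆ K → K' = K}

/-- `Φ_𝓑`: the pure Horn function whose true assignments are exactly those `x` such that for
every `B ∈ 𝓑` on which `x` is identically true, `x` is identically true on all of `V`. -/
noncomputable def PhiB (𝓑 : Set (Finset V)) : (V → Bool) → Bool :=
  fun x => decide (∀ B ∈ 𝓑, (∀ u ∈ B, x u = true) → ∀ v : V, x v = true)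

/-- `𝓑` is a unique key hypergraph: `Φ_𝓑` is the unique pure Horn function `h`
with `𝒦(h) = 𝓑`. -/
def UniqueKeyHypergraph (𝓑 : Set (Finset V)) : Prop :=
  minKeys (PhiB 𝓑) = 𝓑 ∧
  ∀ h : (V → Bool) → Bool, PureHorn h → minKeys h = 𝓑 → h = PhiB 𝓑

/-- The edge set of a simple graph viewed as a hypergraph of two-element sets. -/
def edgeFam (G : SimpleGraph V) : Set (Finset V) :=
  {e | ∃ u v : V, G.Adj u v ∧ e = {u, v}}

/-- The vertex set of the graph `G_Φ` associated to a CNF with `n` variables and `m`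
clauses: `Sum.inl (i, 0)` is the positive literal vertex `xᵢ`, `Sum.inl (i, 1)` is the
negative literal vertex `x̄ᵢ`, `Sum.inl (i, 2)` is the auxiliary vertex `yᵢ`,
`Sum.inr (some j)` is the clause vertex `Cⱼ`, and `Sum.inr none` is the vertex `z`. -/
abbrev Vtx (n m : ℕ) : Type := (Fin n × Fin 3) ⊕ Option (Fin m)

/-- The graph `G_Φ` associated to the CNF whose `j`-th clause is the set of literals
`Cl j` (a literal `(i, true)` stands for `xᵢ`, and `(i, false)` for `x̄ᵢ`): for each `i`
the triangle on `{xᵢ, x̄ᵢ, yᵢ}`, a clique on the clause vertices together with `z`, and an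
edge between each clause vertex and each literal vertex occurring in that clause. -/
def GPhi (n m : ℕ) (Cl : Fin m → Finset (Fin n × Bool)) : SimpleGraph (Vtx n m) :=
  SimpleGraph.fromRel (fun a b =>
    match a, b with
    | Sum.inl (i, _), Sum.inl (i', _) => i = i'
    | Sum.inr _, Sum.inr _ => True
    | Sum.inl (i, k), Sum.inr (some j) =>
        (k = 0 ∧ (i, true) ∈ Cl j) ∨ (k = 1 ∧ (i, false) ∈ Cl j)
    | _, _ => False)

section General
set_option linter.unusedSectionVars false

variable {V : Type*} [Fintype V] [DecidableEq V]

/-- characteristic assignment of a finset -/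
noncomputable def chi (A : Finset V) : V → Bool := fun w => decide (w ∈ A)

lemma chi_true {A : Finset V} {w : V} : chi A w = true ↔ w ∈ A := by simp [chi]

lemma phiB_true {𝓑 : Set (Finset V)} {x : V → Bool} :
    PhiB 𝓑 x = true ↔ ∀ B ∈ 𝓑, (∀ u ∈ B, x u = true) → ∀ v, x v = true := by
  simp [PhiB]

lemma phiB_chi_true {𝓑 : Set (Finset V)} {A : Finset V}
    (h : ∀ B ∈ 𝓑, ¬ (B ⊆ A)) : PhiB 𝓑 (chi A) = true := by
  rw [phiB_true]
  intro B hB hBA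
  exact absurd (fun u hu => chi_true.1 (hBA u hu)) (h B hB)

lemma pureHorn_phiB {𝓑 : Set (Finset V)} : PureHorn (PhiB 𝓑) := by
  constructor
  · rw [phiB_true]; intro B _ _ v; rfl
  · intro x y hx hy
    rw [phiB_true] at hx hy ⊢
    intro B hB hB' v
    have hx' := hx B hB (fun u hu => by have := hB' u hu; simp at this; exact this.1) v
    have hy' := hy B hB (fun u hu => by have := hB' u hu; simp at this; exact this.2) v
    simp [hx', hy']

lemma isKey_mono {h : (V → Bool) → Bool} {K K' : Finset V}
    (hK : IsKey h K) (sub : K ⊆ K') : IsKey h K' := by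
  intro v hv x hx hKx
  exact hK v (fun c => hv (sub c)) x hx (fun a ha => hKx a (sub ha))

lemma exists_minKey {h : (V → Bool) → Bool} {K : Finset V} (hK : IsKey h K) :
    ∃ K' ∈ minKeys h, K' ⊆ K := by
  classical
  have hne : (K.powerset.filter (fun K' => IsKey h K')).Nonempty :=
    ⟨K, by simp [Finset.mem_filter, Finset.mem_powerset, hK]⟩
  obtain ⟨K₀, hK₀, hmin⟩ := Finset.exists_min_image _ Finset.card hne
  simp only [Finset.mem_filter, Finset.mem_powerset] at hK₀
  refine ⟨K₀, ⟨hK₀.2, ?_⟩, hK₀.1⟩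
  intro K'' hK'' hsub
  refine Finset.eq_of_subset_of_card_le hsub ?_
  exact hmin K'' (by simp [Finset.mem_filter, Finset.mem_powerset, hK'', hsub.trans hK₀.1])

lemma isKey_phiB {𝓑 : Set (Finset V)} (hne : 𝓑.Nonempty) {K : Finset V} :
    IsKey (PhiB 𝓑) K ↔ ∃ B ∈ 𝓑, B ⊆ K := by
  constructor
  · intro hK
    by_contra hno
    push_neg at hno
    have hKuniv : K ≠ Finset.univ := by
      rintro rfl
      obtain ⟨B, hB⟩ := hne
      exact hno B hB (Finset.subset_univ B)
    obtain ⟨v, hv⟩ : ∃ v, v ∉ K := by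
      by_contra hc; push_neg at hc
      exact hKuniv (Finset.eq_univ_iff_forall.2 hc)
    have := hK v hv (chi K) (phiB_chi_true hno) (fun a ha => chi_true.2 ha)
    rw [chi_true] at this
    exact hv this
  · rintro ⟨B, hB, hBK⟩ v hv x hx hKx
    exact phiB_true.1 hx B hB (fun u hu => hKx u (hBK hu)) v

lemma minKeys_eq {𝓑 : Set (Finset V)} (hS : SpernerFam 𝓑) (h : (V → Bool) → Bool)
    (hkeys : ∀ K, IsKey h K ↔ ∃ B ∈ 𝓑, B ⊆ K) : minKeys h = 𝓑 := by
  ext K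
  constructor
  · rintro ⟨hk, hmin⟩
    obtain ⟨B, hB, hBK⟩ := (hkeys K).1 hk
    have hBkey : IsKey h B := (hkeys B).2 ⟨B, hB, Finset.Subset.refl B⟩
    rw [← hmin B hBkey hBK]; exact hB
  · intro hB
    refine ⟨(hkeys K).2 ⟨K, hB, Finset.Subset.refl K⟩, ?_⟩
    intro K' hK' hsub
    obtain ⟨B', hB', hB'K'⟩ := (hkeys K').1 hK'
    have : B' = K := hS B' hB' K hB (hB'K'.trans hsub)
    exact Finset.Subset.antisymm hsub (this ▸ hB'K')

lemma keys_iff_of_minKeys {𝓑 : Set (Finset V)} {h : (V → Bool) → Bool}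
    (hm : minKeys h = 𝓑) (K : Finset V) : IsKey h K ↔ ∃ B ∈ 𝓑, B ⊆ K := by
  constructor
  · intro hK
    obtain ⟨K', hK', hsub⟩ := exists_minKey hK
    exact ⟨K', hm ▸ hK', hsub⟩
  · rintro ⟨B, hB, hBK⟩
    have : B ∈ minKeys h := hm ▸ hB
    exact isKey_mono this.1 hBK

lemma h_le_phiB {𝓑 : Set (Finset V)} {h : (V → Bool) → Bool}
    (hkeys : ∀ B ∈ 𝓑, IsKey h B) {x : V → Bool} (hx : h x = true) :
    PhiB 𝓑 x = true := by
  rw [phiB_true]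
  intro B hB hB' v
  by_cases hv : v ∈ B
  · exact hB' v hv
  · exact hkeys B hB v hv x hx hB'

end General
section General2

set_option linter.unusedSectionVars false

variable {V : Type*} [Fintype V] [DecidableEq V]

lemma horn_inf {h : (V → Bool) → Bool} (hh : PureHorn h) (F : Finset (V → Bool))
    (hF : ∀ x ∈ F, h x = true) :
    h (fun v => decide (∀ x ∈ F, x v = true)) = true := by
  classical
  induction F using Finset.induction_on with
  | empty =>
    have : (fun v : V => decide (∀ x ∈ (∅ : Finset (V → Bool)), x v = true)) =
        (fun _ : V => true) := by funext v; simp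
    rw [this]; exact hh.1
  | @insert a F' ha ih =>
    have h1 : h a = true := hF a (Finset.mem_insert_self a F')
    have h2 := ih (fun x hx => hF x (Finset.mem_insert_of_mem hx))
    have h3 := hh.2 a _ h1 h2
    have : (fun v : V => decide (∀ x ∈ insert a F', x v = true)) =
        (fun v => a v && decide (∀ x ∈ F', x v = true)) := by
      funext v
      simp only [Finset.forall_mem_insert, Bool.decide_and]
      cases hav : a v <;> simp [hav]
    rw [this]; exact h3

/-- the closure of `S` under the pure Horn function `h` -/
noncomputable def cl (h : (V → Bool) → Bool) (S : Finset V) : Finset V :=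
  Finset.univ.filter (fun v => ∀ x, h x = true → (∀ u ∈ S, x u = true) → x v = true)

lemma mem_cl {h : (V → Bool) → Bool} {S : Finset V} {v : V} :
    v ∈ cl h S ↔ ∀ x, h x = true → (∀ u ∈ S, x u = true) → x v = true := by
  simp [cl]

lemma subset_cl {h : (V → Bool) → Bool} {S : Finset V} : S ⊆ cl h S := by
  intro v hv; exact mem_cl.2 (fun x _ hx => hx v hv)

lemma h_chi_cl {h : (V → Bool) → Bool} (hh : PureHorn h) (S : Finset V) :
    h (chi (cl h S)) = true := by
  classical
  set F : Finset (V → Bool) :=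
    Finset.univ.filter (fun x => h x = true ∧ ∀ u ∈ S, x u = true) with hFdef
  have hmem : ∀ x : V → Bool, x ∈ F ↔ (h x = true ∧ ∀ u ∈ S, x u = true) := by
    intro x; simp [hFdef]
  have key : (fun v : V => decide (∀ x ∈ F, x v = true)) = chi (cl h S) := by
    funext v
    have : (∀ x ∈ F, x v = true) ↔ v ∈ cl h S := by
      rw [mem_cl]
      constructor
      · intro H x hx hSx; exact H x ((hmem x).2 ⟨hx, hSx⟩)
      · intro H x hx; exact H x ((hmem x).1 hx).1 ((hmem x).1 hx).2
    simp [chi, this]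
  have := horn_inf hh F (fun x hx => ((hmem x).1 hx).1)
  rwa [key] at this

lemma isKey_iff_cl {h : (V → Bool) → Bool} {K : Finset V} :
    IsKey h K ↔ cl h K = Finset.univ := by
  constructor
  · intro hK
    apply Finset.eq_univ_iff_forall.2
    intro v
    by_cases hv : v ∈ K
    · exact subset_cl hv
    · exact mem_cl.2 (hK v hv)
  · intro hcl v hv
    exact mem_cl.1 (hcl ▸ Finset.mem_univ v)

/-- an independent set of a graph -/
def Indep (G : SimpleGraph V) (A : Finset V) : Prop :=
  ∀ a ∈ A, ∀ b ∈ A, ¬ G.Adj a b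

lemma pair_mem_edgeFam {G : SimpleGraph V} {a b : V} (h : G.Adj a b) :
    ({a, b} : Finset V) ∈ edgeFam G := ⟨a, b, h, rfl⟩

lemma indep_iff {G : SimpleGraph V} {A : Finset V} :
    Indep G A ↔ ∀ e ∈ edgeFam G, ¬ e ⊆ A := by
  constructor
  · rintro hI e ⟨u, w, huw, rfl⟩ hsub
    exact hI u (hsub (Finset.mem_insert_self u {w}))
      w (hsub (Finset.mem_insert_of_mem (Finset.mem_singleton_self w))) huw
  · intro hI a ha b hb hab
    exact hI _ (pair_mem_edgeFam hab)
      (Finset.insert_subset ha (Finset.singleton_subset_iff.2 hb))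

lemma sperner_edgeFam (G : SimpleGraph V) : SpernerFam (edgeFam G) := by
  rintro B₁ ⟨u, w, huw, rfl⟩ B₂ ⟨u', w', hu'w', rfl⟩ hsub
  have c1 : ({u, w} : Finset V).card = 2 := Finset.card_pair huw.ne
  have c2 : ({u', w'} : Finset V).card = 2 := Finset.card_pair hu'w'.ne
  exact Finset.eq_of_subset_of_card_le hsub (by rw [c1, c2])

/-- a "bad pair" witnessing non-uniqueness -/
def BadPair (G : SimpleGraph V) (S : Finset V) (v : V) : Prop :=
  v ∉ S ∧ Indep G (insert v S) ∧ ∀ u, G.Adj v u → ∃ s ∈ S, G.Adj s u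

end General2
section General3

set_option linter.unusedSectionVars false
set_option maxHeartbeats 1000000

variable {V : Type*} [Fintype V] [DecidableEq V]

lemma notUniq_of_bad (G : SimpleGraph V) (hne : (edgeFam G).Nonempty)
    {S : Finset V} {v : V} (hb : BadPair G S v) :
    ¬ UniqueKeyHypergraph (edgeFam G) := by
  classical
  obtain ⟨hvS, hind, hN⟩ := hb
  set 𝓑 := edgeFam G with h𝓑
  set h : (V → Bool) → Bool :=
    fun x => PhiB 𝓑 x && decide ((∀ u ∈ S, x u = true) → x v = true) with hdef
  have hSind : Indep G S := fun a ha b hb => hind a (Finset.mem_insert_of_mem ha)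
    b (Finset.mem_insert_of_mem hb)
  have hSnoedge : ∀ e ∈ 𝓑, ¬ e ⊆ S := indep_iff.1 hSind
  -- h is pure Horn
  have hpure : PureHorn h := by
    constructor
    · simp [hdef, pureHorn_phiB.1]
    · intro x y hx hy
      simp only [hdef, Bool.and_eq_true, decide_eq_true_eq] at hx hy ⊢
      refine ⟨pureHorn_phiB.2 x y hx.1 hy.1, ?_⟩
      intro hall
      have hx2 := hx.2 (fun u hu => by have := hall u hu; revert this; simp +contextual)
      have hy2 := hy.2 (fun u hu => by have := hall u hu; revert this; simp +contextual)
      simp [hx2, hy2]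
  -- keys of h are the sets containing an edge
  have hkeys : ∀ K, IsKey h K ↔ ∃ B ∈ 𝓑, B ⊆ K := by
    intro K
    constructor
    · intro hK
      by_contra hno
      push_neg at hno
      have hKuniv : K ≠ Finset.univ := by
        rintro rfl
        obtain ⟨e, he⟩ := hne
        exact hno e he (Finset.subset_univ e)
      by_cases hSK : S ⊆ K
      · -- use χ (insert v K)
        set A := insert v K with hA
        have hnoA : ∀ e ∈ 𝓑, ¬ e ⊆ A := by
          rintro e ⟨a, b, hab, rfl⟩ hsub
          have ha := hsub (Finset.mem_insert_self a {b})
          have hbmem := hsub (Finset.mem_insert_of_mem (Finset.mem_singleton_self b))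
          rw [hA, Finset.mem_insert] at ha hbmem
          rcases ha with rfl | haK
          · rcases hbmem with rfl | hbK
            · exact hab.ne rfl
            · obtain ⟨s, hs, hsb⟩ := hN b hab
              exact hno _ (pair_mem_edgeFam hsb)
                (Finset.insert_subset (hSK hs) (Finset.singleton_subset_iff.2 hbK))
          · rcases hbmem with rfl | hbK
            · obtain ⟨s, hs, hsa⟩ := hN a hab.symm
              exact hno _ (pair_mem_edgeFam hsa)
                (Finset.insert_subset (hSK hs) (Finset.singleton_subset_iff.2 haK))
            · exact hno _ (pair_mem_edgeFam hab)
                (Finset.insert_subset haK (Finset.singleton_subset_iff.2 hbK))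
        have hAuniv : A ≠ Finset.univ := by
          rintro hAe
          obtain ⟨e, he⟩ := hne
          exact hnoA e he (hAe ▸ Finset.subset_univ e)
        obtain ⟨w, hw⟩ : ∃ w, w ∉ A := by
          by_contra hc; push_neg at hc
          exact hAuniv (Finset.eq_univ_iff_forall.2 hc)
        have hwK : w ∉ K := fun hwK => hw (Finset.mem_insert_of_mem hwK)
        have hhA : h (chi A) = true := by
          simp only [hdef, Bool.and_eq_true, decide_eq_true_eq]
          refine ⟨phiB_chi_true hnoA, fun _ => ?_⟩
          exact chi_true.2 (Finset.mem_insert_self v K)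
        have := hK w hwK (chi A) hhA
          (fun a ha => chi_true.2 (Finset.mem_insert_of_mem ha))
        exact hw (chi_true.1 this)
      · -- use χ K
        obtain ⟨w, hw⟩ : ∃ w, w ∉ K := by
          by_contra hc; push_neg at hc
          exact hKuniv (Finset.eq_univ_iff_forall.2 hc)
        have hhK : h (chi K) = true := by
          simp only [hdef, Bool.and_eq_true, decide_eq_true_eq]
          refine ⟨phiB_chi_true hno, fun hall => ?_⟩
          exact absurd (fun u hu => chi_true.1 (hall u hu)) hSK
        have := hK w hw (chi K) hhK (fun a ha => chi_true.2 ha)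
        exact hw (chi_true.1 this)
    · rintro ⟨B, hB, hBK⟩
      refine isKey_mono ?_ hBK
      intro w hw x hx hBx
      have hx1 : PhiB 𝓑 x = true := by
        simp only [hdef, Bool.and_eq_true] at hx; exact hx.1
      exact phiB_true.1 hx1 B hB hBx w
  have hmk : minKeys h = 𝓑 := minKeys_eq (sperner_edgeFam G) h hkeys
  -- h differs from PhiB at chi S
  rintro ⟨_, huniq⟩
  have heq : h = PhiB 𝓑 := huniq h hpure hmk
  have h1 : h (chi S) = false := by
    have hv : chi S v = false := by simp [chi, hvS]
    have hant : ∀ u ∈ S, chi S u = true := fun u hu => chi_true.2 hu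
    have hnimp : ¬ ((∀ u ∈ S, chi S u = true) → chi S v = true) := by
      intro himp
      exact absurd (himp hant) (by simp [hv])
    simp only [hdef, phiB_chi_true hSnoedge, Bool.true_and, decide_eq_false_iff_not]
    exact hnimp
  rw [heq, phiB_chi_true hSnoedge] at h1
  simp at h1

end General3
section General4

set_option linter.unusedSectionVars false
set_option maxHeartbeats 1000000

variable {V : Type*} [Fintype V] [DecidableEq V]

lemma notUniq_of_empty (G : SimpleGraph V) (h0 : edgeFam G = ∅) :
    ¬ UniqueKeyHypergraph (edgeFam G) := by
  rintro ⟨h1, -⟩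
  have huniv : (Finset.univ : Finset V) ∈ minKeys (PhiB (edgeFam G)) := by
    constructor
    · intro v hv
      exact absurd (Finset.mem_univ v) hv
    · intro K hK hsub
      by_contra hneq
      obtain ⟨v, hv⟩ : ∃ v, v ∉ K := by
        by_contra hc; push_neg at hc
        exact hneq (Finset.eq_univ_iff_forall.2 hc)
      have := hK v hv (chi K) (phiB_chi_true (by simp [h0]))
        (fun a ha => chi_true.2 ha)
      exact hv (chi_true.1 this)
  rw [h1, h0] at huniv
  exact huniv

lemma uniq_of_noBad (G : SimpleGraph V) (hne : (edgeFam G).Nonempty)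
    (hnb : ∀ S v, ¬ BadPair G S v) :
    UniqueKeyHypergraph (edgeFam G) := by
  classical
  set 𝓑 := edgeFam G with h𝓑
  constructor
  · exact minKeys_eq (sperner_edgeFam G) _ (fun K => isKey_phiB hne)
  · intro h hpure hmk
    by_contra hneq
    have hkeys : ∀ K, IsKey h K ↔ ∃ B ∈ 𝓑, B ⊆ K := keys_iff_of_minKeys hmk
    have hle : ∀ x, h x = true → PhiB 𝓑 x = true :=
      fun x hx => h_le_phiB (fun B hB => (hkeys B).2 ⟨B, hB, Finset.Subset.refl B⟩) hx
    obtain ⟨x, hx⟩ : ∃ x, h x ≠ PhiB 𝓑 x := by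
      by_contra hc; push_neg at hc; exact hneq (funext hc)
    have hhx : h x = false := by
      cases hhx : h x
      · rfl
      · exact absurd (hhx.trans (hle x hhx).symm) hx
    have hΦx : PhiB 𝓑 x = true := by
      cases hPx : PhiB 𝓑 x
      · exact absurd (hhx.trans hPx.symm) hx
      · rfl
    set S := Finset.univ.filter (fun w => x w = true) with hSdef
    have hxS : x = chi S := by
      funext w
      simp only [chi, hSdef, Finset.mem_filter, Finset.mem_univ, true_and]
      cases hxw : x w <;> simp [hxw]
    have hSuniv : S ≠ Finset.univ := by
      rintro hS
      have : x = fun _ => true := by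
        funext w
        rw [hxS]
        exact chi_true.2 (hS ▸ Finset.mem_univ w)
      rw [this, hpure.1] at hhx
      exact Bool.noConfusion hhx
    have hSnoedge : ∀ e ∈ 𝓑, ¬ e ⊆ S := by
      intro e he hsub
      have hall := phiB_true.1 hΦx e he
        (fun u hu => by rw [hxS]; exact chi_true.2 (hsub hu))
      apply hSuniv
      apply Finset.eq_univ_iff_forall.2
      intro w
      simp only [hSdef, Finset.mem_filter, Finset.mem_univ, true_and]
      exact hall w
    set C := cl h S with hCdef
    have hC : h (chi C) = true := h_chi_cl hpure S
    have hSC : S ⊆ C := subset_cl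
    have hSneC : S ≠ C := by
      rintro hSeq
      rw [hxS, hSeq, hC] at hhx
      exact Bool.noConfusion hhx
    have hCuniv : C ≠ Finset.univ := by
      intro hCu
      have : IsKey h S := isKey_iff_cl.2 hCu
      obtain ⟨e, he, hsub⟩ := (hkeys S).1 this
      exact hSnoedge e he hsub
    have hCnoedge : ∀ e ∈ 𝓑, ¬ e ⊆ C := by
      intro e he hsub
      have hekey : IsKey h e := (hkeys e).2 ⟨e, he, Finset.Subset.refl e⟩
      apply hCuniv
      apply Finset.eq_univ_iff_forall.2
      intro w
      by_cases hw : w ∈ e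
      · exact hsub hw
      · have := hekey w hw (chi C) hC (fun a ha => chi_true.2 (hsub ha))
        exact chi_true.1 this
    obtain ⟨v₀, hv₀C, hv₀S⟩ : ∃ v₀ ∈ C, v₀ ∉ S := by
      by_contra hc; push_neg at hc
      exact hSneC (Finset.Subset.antisymm hSC hc)
    have hv₀cl : ∀ x' : V → Bool, h x' = true → (∀ u ∈ S, x' u = true) →
        x' v₀ = true := mem_cl.1 hv₀C
    apply hnb S v₀
    refine ⟨hv₀S, ?_, ?_⟩
    · intro a ha b hb hab
      have haC : a ∈ C := by
        rcases Finset.mem_insert.1 ha with rfl | h'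
        · exact hv₀C
        · exact hSC h'
      have hbC : b ∈ C := by
        rcases Finset.mem_insert.1 hb with rfl | h'
        · exact hv₀C
        · exact hSC h'
      exact hCnoedge _ (pair_mem_edgeFam hab)
        (Finset.insert_subset haC (Finset.singleton_subset_iff.2 hbC))
    · intro u hu
      by_contra hc; push_neg at hc
      have huC : u ∉ C := by
        intro huC
        exact hCnoedge _ (pair_mem_edgeFam hu)
          (Finset.insert_subset hv₀C (Finset.singleton_subset_iff.2 huC))
      have huv₀ : u ≠ v₀ := fun h' => G.irrefl (h' ▸ hu)
      have hKkey : IsKey h (insert u S) := by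
        intro w hw x' hx' hKx'
        have hx'S : ∀ s ∈ S, x' s = true :=
          fun s hs => hKx' s (Finset.mem_insert_of_mem hs)
        have hx'v₀ : x' v₀ = true := hv₀cl x' hx' hx'S
        have hx'u : x' u = true := hKx' u (Finset.mem_insert_self u S)
        by_cases hwv₀ : w = v₀
        · rw [hwv₀]; exact hx'v₀
        · have he : ({u, v₀} : Finset V) ∈ 𝓑 := pair_mem_edgeFam hu.symm
          have hekey : IsKey h ({u, v₀} : Finset V) :=
            (hkeys _).2 ⟨_, he, Finset.Subset.refl _⟩
          have hwnot : w ∉ ({u, v₀} : Finset V) := by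
            simp only [Finset.mem_insert, Finset.mem_singleton]
            rintro (rfl | rfl)
            · exact hw (Finset.mem_insert_self w S)
            · exact hwv₀ rfl
          refine hekey w hwnot x' hx' ?_
          intro a ha
          rcases Finset.mem_insert.1 ha with rfl | ha'
          · exact hx'u
          · rw [Finset.mem_singleton.1 ha']; exact hx'v₀
      obtain ⟨e, he, hsub⟩ := (hkeys _).1 hKkey
      obtain ⟨a, b, hab, rfl⟩ := he
      have ha' := hsub (Finset.mem_insert_self a {b})
      have hb' := hsub (Finset.mem_insert_of_mem (Finset.mem_singleton_self b))
      rcases Finset.mem_insert.1 ha' with rfl | haS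
      · rcases Finset.mem_insert.1 hb' with rfl | hbS
        · exact hab.ne rfl
        · exact hc b hbS hab.symm
      · rcases Finset.mem_insert.1 hb' with rfl | hbS
        · exact hc a haS hab
        · exact hSnoedge _ (pair_mem_edgeFam hab)
            (Finset.insert_subset haS (Finset.singleton_subset_iff.2 hbS))

end General4
section GraphPart

set_option maxHeartbeats 1000000

variable {n m : ℕ} {Cl : Fin m → Finset (Fin n × Bool)}

lemma adj_inl_inl {i i' : Fin n} {k k' : Fin 3} :
    (GPhi n m Cl).Adj (Sum.inl (i,k)) (Sum.inl (i',k')) ↔ (i = i' ∧ k ≠ k') := by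
  simp only [GPhi, SimpleGraph.fromRel_adj, ne_eq, Sum.inl.injEq, Prod.mk.injEq, not_and]
  constructor
  · rintro ⟨h1, h2 | h2⟩ <;> subst h2 <;> exact ⟨rfl, fun hk => h1 rfl hk⟩
  · rintro ⟨rfl, hk⟩
    exact ⟨fun _ h => hk h, Or.inl rfl⟩

lemma adj_inl_some {i : Fin n} {k : Fin 3} {j : Fin m} :
    (GPhi n m Cl).Adj (Sum.inl (i,k)) (Sum.inr (some j)) ↔
      ((k = 0 ∧ (i, true) ∈ Cl j) ∨ (k = 1 ∧ (i, false) ∈ Cl j)) := by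
  simp [GPhi, SimpleGraph.fromRel_adj]

lemma adj_some_inl {i : Fin n} {k : Fin 3} {j : Fin m} :
    (GPhi n m Cl).Adj (Sum.inr (some j)) (Sum.inl (i,k)) ↔
      ((k = 0 ∧ (i, true) ∈ Cl j) ∨ (k = 1 ∧ (i, false) ∈ Cl j)) := by
  rw [SimpleGraph.adj_comm]; exact adj_inl_some

lemma adj_inl_none {p : Fin n × Fin 3} :
    ¬ (GPhi n m Cl).Adj (Sum.inl p) (Sum.inr none) := by
  obtain ⟨i, k⟩ := p
  simp [GPhi, SimpleGraph.fromRel_adj]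

lemma adj_inr_inr {w w' : Option (Fin m)} :
    (GPhi n m Cl).Adj (Sum.inr w) (Sum.inr w') ↔ w ≠ w' := by
  simp [GPhi, SimpleGraph.fromRel_adj]

end GraphPart
section GraphPart2

set_option maxHeartbeats 1000000

variable {n m : ℕ} {Cl : Fin m → Finset (Fin n × Bool)}

lemma badPair_of_sat {σ : Fin n → Bool} (hσ : ∀ j, ∃ l ∈ Cl j, σ l.1 = l.2) :
    BadPair (GPhi n m Cl)
      (Finset.univ.image (fun i : Fin n => (Sum.inl (i, if σ i then 0 else 1) : Vtx n m)))
      (Sum.inr none) := by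
  classical
  set S := Finset.univ.image
    (fun i : Fin n => (Sum.inl (i, if σ i then 0 else 1) : Vtx n m)) with hS
  have hmem : ∀ s ∈ S, ∃ i : Fin n, s = Sum.inl (i, if σ i then 0 else 1) := by
    intro s hs
    simp only [hS, Finset.mem_image, Finset.mem_univ, true_and] at hs
    obtain ⟨i, hi⟩ := hs
    exact ⟨i, hi.symm⟩
  refine ⟨?_, ?_, ?_⟩
  · intro hmem'
    obtain ⟨i, hi⟩ := hmem _ hmem'
    exact absurd hi (by simp)
  · intro a ha b hb hab
    rcases Finset.mem_insert.1 ha with rfl | haS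
    · rcases Finset.mem_insert.1 hb with rfl | hbS
      · exact (GPhi n m Cl).irrefl hab
      · obtain ⟨i, rfl⟩ := hmem _ hbS
        exact adj_inl_none hab.symm
    · obtain ⟨i, rfl⟩ := hmem _ haS
      rcases Finset.mem_insert.1 hb with rfl | hbS
      · exact adj_inl_none hab
      · obtain ⟨i', rfl⟩ := hmem _ hbS
        obtain ⟨rfl, hk⟩ := adj_inl_inl.1 hab
        exact hk rfl
  · intro u hu
    rcases u with p | w
    · exact absurd hu.symm adj_inl_none
    · rcases w with _ | j
      · exact absurd rfl (adj_inr_inr.1 hu)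
      · obtain ⟨⟨i, b⟩, hl, hb⟩ := hσ j
        refine ⟨Sum.inl (i, if σ i then 0 else 1), ?_, ?_⟩
        · simp [hS]
        · rw [adj_inl_some]
          cases b
          · have : σ i = false := hb
            rw [this]
            exact Or.inr ⟨rfl, hl⟩
          · have : σ i = true := hb
            rw [this]
            exact Or.inl ⟨rfl, hl⟩

lemma sat_of_badPair (hcl : ∀ (j : Fin m) (i : Fin n), ¬ ((i, true) ∈ Cl j ∧ (i, false) ∈ Cl j))
    {S : Finset (Vtx n m)} {v : Vtx n m} (hb : BadPair (GPhi n m Cl) S v) :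
    ∃ σ : Fin n → Bool, ∀ j : Fin m, ∃ l ∈ Cl j, σ l.1 = l.2 := by
  classical
  obtain ⟨hvS, hind, hN⟩ := hb
  have hSv : ∀ s ∈ S, ¬ (GPhi n m Cl).Adj s v := fun s hs =>
    hind s (Finset.mem_insert_of_mem hs) v (Finset.mem_insert_self _ _)
  have hSS : ∀ a ∈ S, ∀ b ∈ S, ¬ (GPhi n m Cl).Adj a b := fun a ha b hb =>
    hind a (Finset.mem_insert_of_mem ha) b (Finset.mem_insert_of_mem hb)
  rcases v with ⟨i, k⟩ | w
  · exfalso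
    -- the vertex v cannot be a literal or auxiliary vertex
    fin_cases k
    · -- k = 0 : x_i ; use the neighbour y_i
      obtain ⟨s, hs, hadj⟩ := hN (Sum.inl (i, 2)) (adj_inl_inl.2 ⟨rfl, by decide⟩)
      rcases s with ⟨i', k'⟩ | w'
      · obtain ⟨rfl, hk'⟩ := adj_inl_inl.1 hadj
        by_cases h0 : k' = 0
        · subst h0; exact hvS hs
        · exact hSv _ hs (adj_inl_inl.2 ⟨rfl, h0⟩)
      · rcases w' with _ | j
        · exact adj_inl_none hadj.symm
        · rcases adj_some_inl.1 hadj with ⟨h2, _⟩ | ⟨h2, _⟩ <;> exact absurd h2 (by decide)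
    · -- k = 1 : x̄_i ; use the neighbour y_i
      obtain ⟨s, hs, hadj⟩ := hN (Sum.inl (i, 2)) (adj_inl_inl.2 ⟨rfl, by decide⟩)
      rcases s with ⟨i', k'⟩ | w'
      · obtain ⟨rfl, hk'⟩ := adj_inl_inl.1 hadj
        by_cases h0 : k' = 1
        · subst h0; exact hvS hs
        · exact hSv _ hs (adj_inl_inl.2 ⟨rfl, h0⟩)
      · rcases w' with _ | j
        · exact adj_inl_none hadj.symm
        · rcases adj_some_inl.1 hadj with ⟨h2, _⟩ | ⟨h2, _⟩ <;> exact absurd h2 (by decide)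
    · -- k = 2 : y_i ; use the neighbours x_i and x̄_i
      have hpos : ∃ j, Sum.inr (some j) ∈ S ∧ (i, true) ∈ Cl j := by
        obtain ⟨s, hs, hadj⟩ := hN (Sum.inl (i, 0)) (adj_inl_inl.2 ⟨rfl, by decide⟩)
        rcases s with ⟨i', k'⟩ | w'
        · obtain ⟨rfl, hk'⟩ := adj_inl_inl.1 hadj
          exfalso
          by_cases h2 : k' = 2
          · subst h2; exact hvS hs
          · exact hSv _ hs (adj_inl_inl.2 ⟨rfl, h2⟩)
        · rcases w' with _ | j
          · exact absurd hadj.symm adj_inl_none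
          · rcases adj_some_inl.1 hadj with ⟨_, h3⟩ | ⟨h2, _⟩
            · exact ⟨j, hs, h3⟩
            · exact absurd h2 (by decide)
      have hneg : ∃ j, Sum.inr (some j) ∈ S ∧ (i, false) ∈ Cl j := by
        obtain ⟨s, hs, hadj⟩ := hN (Sum.inl (i, 1)) (adj_inl_inl.2 ⟨rfl, by decide⟩)
        rcases s with ⟨i', k'⟩ | w'
        · obtain ⟨rfl, hk'⟩ := adj_inl_inl.1 hadj
          exfalso
          by_cases h2 : k' = 2
          · subst h2; exact hvS hs
          · exact hSv _ hs (adj_inl_inl.2 ⟨rfl, h2⟩)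
        · rcases w' with _ | j
          · exact absurd hadj.symm adj_inl_none
          · rcases adj_some_inl.1 hadj with ⟨h2, _⟩ | ⟨_, h3⟩
            · exact absurd h2 (by decide)
            · exact ⟨j, hs, h3⟩
      obtain ⟨j, hjS, hjCl⟩ := hpos
      obtain ⟨j', hj'S, hj'Cl⟩ := hneg
      by_cases hjj : j = j'
      · subst hjj; exact hcl j i ⟨hjCl, hj'Cl⟩
      · exact hSS _ hjS _ hj'S (adj_inr_inr.2 (by simp [hjj]))
  · rcases w with _ | j
    · -- v = z : extract a satisfying assignment
      refine ⟨fun i => decide (Sum.inl (i, (0 : Fin 3)) ∈ S), ?_⟩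
      intro j
      obtain ⟨s, hs, hadj⟩ := hN (Sum.inr (some j)) (adj_inr_inr.2 (by simp))
      rcases s with ⟨i, k⟩ | w'
      · rcases adj_inl_some.1 hadj with ⟨hk, hmem⟩ | ⟨hk, hmem⟩
        · subst hk
          exact ⟨(i, true), hmem, by simp [hs]⟩
        · subst hk
          refine ⟨(i, false), hmem, ?_⟩
          simp only [decide_eq_false_iff_not]
          intro h0
          exact hSS _ h0 _ hs (adj_inl_inl.2 ⟨rfl, by decide⟩)
      · exfalso
        rcases w' with _ | j'
        · exact hvS hs
        · exact hSv _ hs (adj_inr_inr.2 (by simp))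
    · -- v = C_j : impossible, use the neighbour z
      exfalso
      obtain ⟨s, hs, hadj⟩ := hN (Sum.inr none) (adj_inr_inr.2 (by simp))
      rcases s with p | w'
      · exact adj_inl_none hadj
      · rcases w' with _ | j'
        · exact absurd rfl (adj_inr_inr.1 hadj)
        · by_cases hjj : j' = j
          · subst hjj; exact hvS hs
          · exact hSv _ hs (adj_inr_inr.2 (by simp [hjj]))

end GraphPart2
/-- A CNF `Φ` (in which no clause contains both a variable and its negation) is not
satisfiable iff the graph `G_Φ` is a unique key graph. -/
theorem stmt8 (n m : ℕ) (Cl : Fin m → Finset (Fin n × Bool))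
    (hcl : ∀ (j : Fin m) (i : Fin n), ¬ ((i, true) ∈ Cl j ∧ (i, false) ∈ Cl j)) :
    ¬ (∃ σ : Fin n → Bool, ∀ j : Fin m, ∃ l ∈ Cl j, σ l.1 = l.2) ↔
      UniqueKeyHypergraph (edgeFam (GPhi n m Cl)) := by
  constructor
  · intro hunsat
    have hm : 0 < m := by
      by_contra hm0
      push_neg at hm0
      exact hunsat ⟨fun _ => true, fun j => absurd j.isLt (by omega)⟩
    have hne : (edgeFam (GPhi n m Cl)).Nonempty :=
      ⟨_, pair_mem_edgeFam (G := GPhi n m Cl)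
        (a := Sum.inr (some ⟨0, hm⟩)) (b := Sum.inr none) (adj_inr_inr.2 (by simp))⟩
    refine uniq_of_noBad _ hne ?_
    intro S v hb
    exact hunsat (sat_of_badPair hcl hb)
  · intro huniq hsat
    obtain ⟨σ, hσ⟩ := hsat
    rcases Set.eq_empty_or_nonempty (edgeFam (GPhi n m Cl)) with h0 | hne
    · exact notUniq_of_empty _ h0 huniq
    · exact notUniq_of_bad _ hne (badPair_of_sat hσ) huniq
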